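/- Let P be a polynomial with real coefficients and let x be a real number. Then the limit as the real number h tends to 0 (with h ≠ 0) of Im(P(x + i h)) / h equals P'(x), the derivative of P evaluated at x. -/

import Mathlib

open Complex Filter

theorem squire_trapp_limit_is_derivative (P : Polynomial ℝ) (x : ℝ) :
    Tendsto (fun h : ℝ => ((Polynomial.aeval ((x : ℂ) + I * h)) P).im / h)
      (nhdsWithin 0 {h : ℝ | h ≠ 0}) (nhds (P.derivative.eval x)) := by
  set Q := P.map (algebraMap ℝ ℂ) with hQ
  have h2 : HasDerivAt (fun h : ℝ => (x : ℂ) + I * h) I 0 := by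
    have : HasDerivAt (fun h : ℝ => (h : ℂ)) 1 0 := Complex.ofRealCLM.hasDerivAt
    simpa using ((this.const_mul I).const_add (x : ℂ))
  have h1 : HasDerivAt (fun z : ℂ => Q.eval z) (Q.derivative.eval ((x : ℂ) + I * 0)) ((x : ℂ) + I * 0) :=
    Q.hasDerivAt _
  have h3 : HasDerivAt (fun h : ℝ => Q.eval ((x : ℂ) + I * h)) (Q.derivative.eval ((x : ℂ) + I * 0) * I) 0 :=
    by
      have h1' : HasDerivAt (fun z : ℂ => Q.eval z) (Q.derivative.eval ((x : ℂ) + I * 0)) ((x : ℂ) + I * ((0 : ℝ) : ℂ)) := by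
        simpa using h1
      exact h1'.comp (0 : ℝ) h2
  have h4 : HasDerivAt (fun h : ℝ => (Q.eval ((x : ℂ) + I * h)).im)
      (P.derivative.eval x) 0 := by
    have := (Complex.imCLM.hasFDerivAt.comp_hasDerivAt 0 h3)
    convert this using 1
    all_goals try rfl
    rw [hQ, Polynomial.derivative_map,
      show ((x : ℂ) + I * 0) = algebraMap ℝ ℂ x by simp,
      Polynomial.eval_map, ← Polynomial.aeval_def, Polynomial.aeval_algebraMap_apply]
    simp
  have h5 := hasDerivAt_iff_tendsto_slope.mp h4
  have hg0 : (Q.eval ((x : ℂ) + I * (0 : ℝ))).im = 0 := by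
    rw [hQ, show ((x : ℂ) + I * ((0:ℝ):ℂ)) = algebraMap ℝ ℂ x by simp,
      Polynomial.eval_map, ← Polynomial.aeval_def, Polynomial.aeval_algebraMap_apply]
    simp
  have : (fun h : ℝ => ((Polynomial.aeval ((x : ℂ) + I * h)) P).im / h)
      = slope (fun h : ℝ => (Q.eval ((x : ℂ) + I * h)).im) 0 := by
    funext h
    rw [slope_def_field]
    have h0 : ((Polynomial.aeval ((x : ℂ) + I * (0:ℝ))) P).im = 0 := by
      rw [show ((x : ℂ) + I * ((0:ℝ):ℂ)) = algebraMap ℝ ℂ x by simp, Polynomial.aeval_algebraMap_apply]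
      simp
    simp only [hQ, Polynomial.eval_map, ← Polynomial.aeval_def, Complex.ofReal_zero, mul_zero, add_zero] at h0 ⊢
    rw [h0]
    ring
  rw [this]
  exact h5
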